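/- Every eigenvalue of the platoon Laplacian L (that is, every complex root of the characteristic polynomial of L, counted with algebraic multiplicity) is a nonnegative real number. -/

import Mathlib

/-- The platoon Laplacian: an `N × N` real matrix (rows/columns `0, …, N-1`
correspond to vehicles `1, …, N`). The first row is zero, the last row has
entries `-1, 1`, and row `i` (for `1 ≤ i ≤ N-2`, i.e. vehicle `i+1`) has
entries `-1`, `1 + ε (i+1)`, `-ε (i+1)` on the sub-, main and superdiagonal. -/
def platoonL (N : ℕ) (ε : ℕ → ℝ) : Matrix (Fin N) (Fin N) ℝ :=
  fun i j =>
    if i.val = 0 then 0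
    else if i.val = N - 1 then
      (if j.val = N - 2 then -1 else if j = i then 1 else 0)
    else
      if j.val = i.val - 1 then -1
      else if j = i then 1 + ε (i.val + 1)
      else if j.val = i.val + 1 then -(ε (i.val + 1))
      else 0

open Finset in
private lemma sum_three_ite {N : ℕ} (a b c : Fin N) (x y z : ℂ) (v : Fin N → ℂ) :
    (∑ j : Fin N, ((if j = a then x else 0) + (if j = b then y else 0)
        + (if j = c then z else 0)) * v j) = x * v a + y * v b + z * v c := by
  simp [add_mul, Finset.sum_add_distrib, ite_mul, Finset.sum_ite_eq']

/-- The key scalar computation: if `V` satisfies the eigenvector recurrences of the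
platoon Laplacian with nonnegative couplings, then the eigenvalue is a nonnegative real. -/
private lemma platoon_core (N : ℕ) (μ : ℂ) (V : ℕ → ℂ) (E : ℕ → ℝ)
    (hE : ∀ j, 0 ≤ E j)
    (hV0 : V 0 = 0)
    (hEtop : E (N - 1) = 0)
    (hVtop : ∀ j, N ≤ j → V j = 0)
    (heq : ∀ j, 1 ≤ j → j ≤ N - 1 →
      (V j - V (j - 1)) + (E j : ℂ) * (V j - V (j + 1)) = μ * V j)
    (hne : ∃ j, V j ≠ 0) :
    ∃ r : ℝ, 0 ≤ r ∧ μ = (r : ℂ) := by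
  classical
  -- p : least index with V p ≠ 0
  set p := Nat.find hne with hp_def
  have hVp : V p ≠ 0 := Nat.find_spec hne
  have hmin : ∀ m, m < p → V m = 0 := by
    intro m hm
    by_contra h
    have hle : p ≤ m := Nat.find_le h
    omega
  have hp1 : 1 ≤ p := by
    rcases Nat.eq_zero_or_pos p with h | h
    · exact absurd (h ▸ hVp) (by simp [hV0])
    · exact h
  have hpN : p < N := by
    by_contra h
    exact hVp (hVtop p (by omega))
  -- k : least t with E (p + t) = 0
  have hqex : ∃ t, E (p + t) = 0 := by
    refine ⟨N - 1 - p, ?_⟩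
    have : p + (N - 1 - p) = N - 1 := by omega
    rw [this]; exact hEtop
  set k := Nat.find hqex with hk_def
  have hEq0 : E (p + k) = 0 := Nat.find_spec hqex
  have hEpos : ∀ t, t < k → 0 < E (p + t) := by
    intro t ht
    have hne' : E (p + t) ≠ 0 := Nat.find_min hqex ht
    exact lt_of_le_of_ne (hE _) (Ne.symm hne')
  have hkN : p + k ≤ N - 1 := by
    have : k ≤ N - 1 - p := Nat.find_min' hqex (by
      have : p + (N - 1 - p) = N - 1 := by omega
      rw [this]; exact hEtop)
    omega
  -- weights
  set w : ℕ → ℝ := fun t => ∏ j ∈ Finset.range t, E (p + j) with hw_def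
  have hw0 : w 0 = 1 := by simp [hw_def]
  have hwsucc : ∀ t, w (t + 1) = w t * E (p + t) := by
    intro t; simp [hw_def, Finset.prod_range_succ]
  have hwpos : ∀ t, t ≤ k → 0 < w t := by
    intro t ht
    apply Finset.prod_pos
    intro j hj
    exact hEpos j (by simp at hj; omega)
  -- define numerator and denominator
  set D : ℝ := ∑ t ∈ Finset.range (k + 1), w t * Complex.normSq (V (p + t)) with hD_def
  set Nr : ℝ := Complex.normSq (V p)
      + ∑ t ∈ Finset.range k, w t * E (p + t) * Complex.normSq (V (p + t) - V (p + t + 1))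
    with hNr_def
  have conj_mul' : ∀ z : ℂ, (starRingEnd ℂ) z * z = (Complex.normSq z : ℂ) := by
    intro z; rw [mul_comm, Complex.mul_conj]
  -- the key identity
  have key : μ * (D : ℂ) = (Nr : ℂ) := by
    have hDc : (D : ℂ) = ∑ t ∈ Finset.range (k + 1),
        (w t : ℂ) * ((starRingEnd ℂ) (V (p + t)) * V (p + t)) := by
      rw [hD_def]
      push_cast
      refine Finset.sum_congr rfl fun t _ => ?_
      rw [conj_mul']
    have hNrc : (Nr : ℂ) = (starRingEnd ℂ) (V p) * V p
        + ∑ t ∈ Finset.range k, (w t : ℂ) * (E (p + t) : ℂ) *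
            ((starRingEnd ℂ) (V (p + t) - V (p + t + 1)) * (V (p + t) - V (p + t + 1))) := by
      rw [hNr_def]
      push_cast
      rw [conj_mul']
      congr 1
      refine Finset.sum_congr rfl fun t _ => ?_
      rw [conj_mul']
    rw [hDc, hNrc, Finset.mul_sum]
    have step1 : ∀ t ∈ Finset.range (k + 1),
        μ * ((w t : ℂ) * ((starRingEnd ℂ) (V (p + t)) * V (p + t)))
          = (w t : ℂ) * (starRingEnd ℂ) (V (p + t)) * (V (p + t) - V (p + t - 1))
            + (w t : ℂ) * (starRingEnd ℂ) (V (p + t)) * ((E (p + t) : ℂ)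
                * (V (p + t) - V (p + t + 1))) := by
      intro t ht
      simp only [Finset.mem_range] at ht
      have h1 : 1 ≤ p + t := by omega
      have h2 : p + t ≤ N - 1 := by omega
      have := heq (p + t) h1 h2
      calc μ * ((w t : ℂ) * ((starRingEnd ℂ) (V (p + t)) * V (p + t)))
          = (w t : ℂ) * (starRingEnd ℂ) (V (p + t)) * (μ * V (p + t)) := by ring
        _ = (w t : ℂ) * (starRingEnd ℂ) (V (p + t))
              * ((V (p + t) - V (p + t - 1)) + (E (p + t) : ℂ)
                  * (V (p + t) - V (p + t + 1))) := by rw [← this]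
        _ = _ := by ring
    rw [Finset.sum_congr rfl step1, Finset.sum_add_distrib]
    -- first sum : peel off t = 0 and shift
    have hS1 : (∑ t ∈ Finset.range (k + 1),
        (w t : ℂ) * (starRingEnd ℂ) (V (p + t)) * (V (p + t) - V (p + t - 1)))
        = (starRingEnd ℂ) (V p) * V p
          + ∑ t ∈ Finset.range k, (w t : ℂ) * (E (p + t) : ℂ) *
              ((starRingEnd ℂ) (V (p + t + 1)) * (V (p + t + 1) - V (p + t))) := by
      rw [Finset.sum_range_succ']
      have h0 : (w 0 : ℂ) * (starRingEnd ℂ) (V (p + 0)) * (V (p + 0) - V (p + 0 - 1))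
          = (starRingEnd ℂ) (V p) * V p := by
        have hVpm : V (p + 0 - 1) = 0 := hmin (p + 0 - 1) (by omega)
        rw [hVpm, hw0]
        push_cast
        ring
      rw [h0]
      rw [add_comm]
      congr 1
      refine Finset.sum_congr rfl fun t _ => ?_
      have e1 : p + (t + 1) = p + t + 1 := by ring
      have e2 : p + t + 1 - 1 = p + t := by omega
      rw [e1, e2, hwsucc]
      push_cast
      ring
    -- second sum : last term vanishes
    have hS2 : (∑ t ∈ Finset.range (k + 1),
        (w t : ℂ) * (starRingEnd ℂ) (V (p + t)) * ((E (p + t) : ℂ)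
            * (V (p + t) - V (p + t + 1))))
        = ∑ t ∈ Finset.range k, (w t : ℂ) * (E (p + t) : ℂ) *
            ((starRingEnd ℂ) (V (p + t)) * (V (p + t) - V (p + t + 1))) := by
      rw [Finset.sum_range_succ]
      have hz : (w k : ℂ) * (starRingEnd ℂ) (V (p + k))
          * ((E (p + k) : ℂ) * (V (p + k) - V (p + k + 1))) = 0 := by
        rw [hEq0]; push_cast; ring
      rw [hz, add_zero]
      exact Finset.sum_congr rfl fun t _ => by ring
    rw [hS1, hS2]
    rw [add_assoc, ← Finset.sum_add_distrib]
    congr 1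
    refine Finset.sum_congr rfl fun t _ => ?_
    simp only [map_sub]
    ring
  -- positivity
  have hNrnonneg : 0 ≤ Nr := by
    rw [hNr_def]
    apply add_nonneg (Complex.normSq_nonneg _)
    apply Finset.sum_nonneg
    intro t ht
    simp only [Finset.mem_range] at ht
    have := hwpos t (by omega)
    have := hE (p + t)
    have := Complex.normSq_nonneg (V (p + t) - V (p + t + 1))
    positivity
  have hDpos : 0 < D := by
    rw [hD_def]
    apply Finset.sum_pos'
    · intro t ht
      simp only [Finset.mem_range] at ht
      exact mul_nonneg (hwpos t (by omega)).le (Complex.normSq_nonneg _)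
    · refine ⟨0, by simp, ?_⟩
      simp only [hw0, one_mul, Nat.add_zero]
      exact (Complex.normSq_pos).2 hVp
  refine ⟨Nr / D, div_nonneg hNrnonneg hDpos.le, ?_⟩
  have hDne : (D : ℂ) ≠ 0 := by
    exact_mod_cast hDpos.ne'
  push_cast
  rw [eq_div_iff hDne]
  exact key

/-- Every eigenvalue of the platoon Laplacian (i.e. every complex root of its
characteristic polynomial, with algebraic multiplicity) is a nonnegative real
number. -/
theorem platoon_eigenvalues_real_nonneg
    (N : ℕ) (hN : 2 ≤ N) (ε : ℕ → ℝ)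
    (hε : ∀ i, 2 ≤ i → i ≤ N - 1 → 0 ≤ ε i) :
    ∀ μ ∈ (((platoonL N ε).map (fun x : ℝ => (x : ℂ))).charpoly).roots,
      ∃ r : ℝ, 0 ≤ r ∧ μ = (r : ℂ) := by
  classical
  intro μ hμ
  set L : Matrix (Fin N) (Fin N) ℂ := (platoonL N ε).map (fun x : ℝ => (x : ℂ)) with hL_def
  -- μ is a root of the characteristic polynomial, hence det (μ • 1 - L) = 0
  have hroot : L.charpoly.eval μ = 0 := by
    have := Polynomial.isRoot_of_mem_roots hμ
    exact this
  have hdet : (μ • (1 : Matrix (Fin N) (Fin N) ℂ) - L).det = 0 := by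
    have h1 : L.charpoly.eval μ = (Polynomial.eval (Matrix.scalar (Fin N) μ)
        (matPolyEquiv (Matrix.charmatrix L))).det := by
      rw [Matrix.charpoly, eval_det]
    rw [h1, Matrix.matPolyEquiv_charmatrix] at hroot
    simpa [Matrix.smul_one_eq_diagonal] using hroot
  obtain ⟨v, hvne, hv⟩ := Matrix.exists_mulVec_eq_zero_iff.2 hdet
  have hEig : ∀ i : Fin N, L.mulVec v i = μ * v i := by
    intro i
    have h := congrFun hv i
    simp only [Matrix.sub_mulVec, Matrix.smul_mulVec, Matrix.one_mulVec,
      Pi.sub_apply, Pi.smul_apply, smul_eq_mul, Pi.zero_apply] at h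
    exact (sub_eq_zero.mp h).symm
  have hmv : ∀ i : Fin N, L.mulVec v i = ∑ j : Fin N, ((platoonL N ε i j : ℝ) : ℂ) * v j := by
    intro i
    simp [hL_def, Matrix.mulVec, dotProduct, Matrix.map_apply]
  -- Row 0 : v 0 vanishes unless μ = 0
  rcases eq_or_ne μ 0 with hμ0 | hμ0
  · exact ⟨0, le_refl 0, by simp [hμ0]⟩
  have i0lt : (0 : ℕ) < N := by omega
  have hv0 : v ⟨0, i0lt⟩ = 0 := by
    have h := hEig ⟨0, i0lt⟩
    rw [hmv] at h
    have hz : (∑ j : Fin N, ((platoonL N ε ⟨0, i0lt⟩ j : ℝ) : ℂ) * v j) = 0 := by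
      apply Finset.sum_eq_zero
      intro j _
      simp [platoonL]
    rw [hz] at h
    exact (mul_eq_zero.mp h.symm).resolve_left hμ0
  -- Set up the scalar data
  set V : ℕ → ℂ := fun j => if h : j < N then v ⟨j, h⟩ else 0 with hV_def
  set E : ℕ → ℝ := fun j => if 1 ≤ j ∧ j ≤ N - 2 then ε (j + 1) else 0 with hE_def
  apply platoon_core N μ V E
  · -- nonnegativity of E
    intro j
    rw [hE_def]
    dsimp only
    split_ifs with h
    · exact hε (j + 1) (by omega) (by omega)
    · exact le_refl 0
  · -- V 0 = 0
    rw [hV_def]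
    dsimp only
    rw [dif_pos i0lt]
    exact hv0
  · -- E (N-1) = 0
    rw [hE_def]
    dsimp only
    rw [if_neg (by omega)]
  · -- V vanishes above N
    intro j hj
    rw [hV_def]
    dsimp only
    rw [dif_neg (by omega)]
  · -- the recurrences
    intro j hj1 hj2
    have hjN : j < N := by omega
    set i : Fin N := ⟨j, hjN⟩ with hi_def
    have hieq := hEig i
    rw [hmv] at hieq
    have hVj : V j = v i := by rw [hV_def]; dsimp only; rw [dif_pos hjN]
    rcases eq_or_lt_of_le hj2 with hlast | hmid
    · -- last row : j = N - 1
      have hjval : j = N - 1 := hlast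
      have haN : N - 2 < N := by omega
      set a : Fin N := ⟨N - 2, haN⟩ with ha_def
      have hane : a ≠ i := by
        rw [ha_def, hi_def, Ne, Fin.mk.injEq]
        omega
      have hsum : (∑ j' : Fin N, ((platoonL N ε i j' : ℝ) : ℂ) * v j')
          = (-1) * v a + 1 * v i + 0 * v i := by
        rw [← sum_three_ite a i i (-1) 1 0 v]
        refine Finset.sum_congr rfl fun j' _ => ?_
        congr 1
        simp only [platoonL]
        rw [if_neg (show ¬ i.val = 0 by rw [hi_def]; simp; omega),
          if_pos (show i.val = N - 1 by rw [hi_def]; simpa using hjval)]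
        by_cases hA : j' = a
        · rw [if_pos (by rw [hA, ha_def]), if_pos hA, if_neg (by rw [hA]; exact hane),
            if_neg (by rw [hA]; exact hane)]
          norm_num
        · rw [if_neg (show ¬ j'.val = N - 2 from fun h => hA (by rw [ha_def]; exact Fin.ext h)),
            if_neg hA]
          by_cases hB : j' = i
          · rw [if_pos hB, if_pos hB]; norm_num
          · rw [if_neg hB, if_neg hB]; norm_num
      rw [hsum] at hieq
      have hVjm : V (j - 1) = v a := by
        rw [hV_def]; dsimp only
        rw [dif_pos (show j - 1 < N by omega)]
        congr 1
        rw [ha_def]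
        exact Fin.ext (by simp; omega)
      have hEj : E j = 0 := by
        rw [hE_def]; dsimp only
        rw [if_neg (by omega)]
      rw [hVj, hVjm, hEj]
      push_cast
      linear_combination hieq
    · -- middle row : 1 ≤ j ≤ N - 2
      have hjmid : j ≤ N - 2 := by omega
      have haN : j - 1 < N := by omega
      have hcN : j + 1 < N := by omega
      set a : Fin N := ⟨j - 1, haN⟩ with ha_def
      set c : Fin N := ⟨j + 1, hcN⟩ with hc_def
      have hsum : (∑ j' : Fin N, ((platoonL N ε i j' : ℝ) : ℂ) * v j')
          = (-1) * v a + ((1 + ε (j + 1) : ℝ) : ℂ) * v i + ((-(ε (j + 1)) : ℝ) : ℂ) * v c := by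
        rw [← sum_three_ite a i c (-1) ((1 + ε (j + 1) : ℝ) : ℂ) ((-(ε (j + 1)) : ℝ) : ℂ) v]
        refine Finset.sum_congr rfl fun j' _ => ?_
        congr 1
        simp only [platoonL]
        rw [if_neg (show ¬ i.val = 0 by rw [hi_def]; simp; omega),
          if_neg (show ¬ i.val = N - 1 by rw [hi_def]; simp; omega)]
        have hival : i.val = j := by rw [hi_def]
        by_cases hA : j' = a
        · rw [if_pos (by simp only [hA, ha_def, hi_def, Fin.ext_iff, Fin.val_mk] <;> omega),
            if_pos hA,
            if_neg (by simp only [hA, ha_def, hi_def, Fin.ext_iff, Fin.val_mk] <;> omega),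
            if_neg (by simp only [hA, ha_def, hc_def, Fin.ext_iff, Fin.val_mk] <;> omega)]
          norm_num
        · have hA' : ¬ j'.val = i.val - 1 := by
            intro h
            exact hA (by rw [ha_def]; exact Fin.ext (by rw [h, hival]))
          rw [if_neg hA', if_neg hA]
          by_cases hB : j' = i
          · rw [if_pos hB, if_pos hB,
              if_neg (by simp only [hB, hc_def, hi_def, Fin.ext_iff, Fin.val_mk] <;> omega)]
            push_cast; ring
          · rw [if_neg hB, if_neg hB]
            by_cases hC : j' = c
            · rw [if_pos (by simp only [hC, hc_def, hi_def, Fin.ext_iff, Fin.val_mk] <;> omega),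
                if_pos hC]
              push_cast; ring
            · have hC' : ¬ j'.val = i.val + 1 := by
                intro h
                exact hC (by rw [hc_def]; exact Fin.ext (by rw [h, hival]))
              rw [if_neg hC', if_neg hC]
              norm_num
      rw [hsum] at hieq
      have hVjm : V (j - 1) = v a := by
        rw [hV_def]; dsimp only
        rw [dif_pos haN]
      have hVjp : V (j + 1) = v c := by
        rw [hV_def]; dsimp only
        rw [dif_pos hcN]
      have hEj : E j = ε (j + 1) := by
        rw [hE_def]; dsimp only
        rw [if_pos ⟨hj1, hjmid⟩]
      rw [hVj, hVjm, hVjp, hEj]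
      push_cast at hieq ⊢
      linear_combination hieq
  · -- some V j ≠ 0
    obtain ⟨i, hi⟩ := Function.ne_iff.mp hvne
    refine ⟨i.val, ?_⟩
    rw [hV_def]
    dsimp only
    rw [dif_pos i.isLt]
    simpa using hi
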